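/- Let L ⊆ ℤⁿ be a lattice. There exists a ℤ-basis of L_pure all of whose elements lie in L⁺ and have support equal to σ_L. -/

import Mathlib

open MvPolynomial

noncomputable section

/-- The integer vector associated to a natural exponent vector. -/
def natVec {ι : Type*} (u : ι →₀ ℕ) : ι → ℤ := fun i => (u i : ℤ)

/-- The lattice ideal `I_L` of a lattice `L ⊆ ℤ^ι` in `k[x_i : i ∈ ι]`. -/
def latticeIdeal (k : Type*) [Field k] {ι : Type*} (L : Submodule ℤ (ι → ℤ)) :
    Ideal (MvPolynomial ι k) :=
  Ideal.span {f | ∃ u v : ι →₀ ℕ, natVec u - natVec v ∈ L ∧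
    f = monomial u (1 : k) - monomial v 1}

/-- `f` is a binomial `x^u - x^v` belonging to the lattice ideal `I_L`. -/
def IsLatticeBinomial (k : Type*) [Field k] {ι : Type*} (L : Submodule ℤ (ι → ℤ))
    (f : MvPolynomial ι k) : Prop :=
  ∃ u v : ι →₀ ℕ, natVec u - natVec v ∈ L ∧ f = monomial u (1 : k) - monomial v 1

/-- The `I_L`-fiber of `u` : all exponent vectors `v` with `v - u ∈ L`. -/
def fiber {ι : Type*} (L : Submodule ℤ (ι → ℤ)) (u : ι →₀ ℕ) : Set (ι →₀ ℕ) :=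
  {v | natVec v - natVec u ∈ L}

/-- `L⁺ = L ∩ ℕ^ι`. -/
def Lplus {ι : Type*} (L : Submodule ℤ (ι → ℤ)) : Set (ι → ℤ) :=
  {w | w ∈ L ∧ ∀ i, 0 ≤ w i}

/-- `L_pure`, the subgroup of `L` generated by `L⁺`. -/
def Lpure {ι : Type*} (L : Submodule ℤ (ι → ℤ)) : Submodule ℤ (ι → ℤ) :=
  Submodule.span ℤ (Lplus L)

/-- `σ_L`, the union of the supports of elements of `L⁺`. -/
def sigmaL {ι : Type*} (L : Submodule ℤ (ι → ℤ)) : Set ι :=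
  {i | ∃ w ∈ Lplus L, w i ≠ 0}

/-- `F̄ ≤_I Ḡ` : some translate of `F` is contained in `G`. -/
def fiberLE {ι : Type*} (F G : Set (ι →₀ ℕ)) : Prop :=
  ∃ t : ι →₀ ℕ, (fun v => t + v) '' F ⊆ G

/-- `F ≡_I G` : equivalence of fibers. -/
def fiberEquiv {ι : Type*} (F G : Set (ι →₀ ℕ)) : Prop :=
  fiberLE F G ∧ fiberLE G F

/-- `F̄ <_I Ḡ`. -/
def fiberLT {ι : Type*} (F G : Set (ι →₀ ℕ)) : Prop :=
  fiberLE F G ∧ ¬ fiberEquiv F G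

/-- The ideal `I_{<F̄}` generated by binomials of `I_L` whose fiber class is `<_I F̄`. -/
def idealLT (k : Type*) [Field k] {ι : Type*} (L : Submodule ℤ (ι → ℤ))
    (F : Set (ι →₀ ℕ)) : Ideal (MvPolynomial ι k) :=
  Ideal.span {f | ∃ u v : ι →₀ ℕ, natVec u - natVec v ∈ L ∧
    f = monomial u (1 : k) - monomial v 1 ∧ fiberLT (fiber L u) F}

/-- The ideal `I_{≤F̄}` generated by binomials of `I_L` whose fiber class is `≤_I F̄`. -/
def idealLE (k : Type*) [Field k] {ι : Type*} (L : Submodule ℤ (ι → ℤ))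
    (F : Set (ι →₀ ℕ)) : Ideal (MvPolynomial ι k) :=
  Ideal.span {f | ∃ u v : ι →₀ ℕ, natVec u - natVec v ∈ L ∧
    f = monomial u (1 : k) - monomial v 1 ∧ fiberLE (fiber L u) F}

/-- `μ(I_L)` : the least cardinality of a binomial generating set of `I_L`. -/
def muIdeal (k : Type*) [Field k] {ι : Type*} (L : Submodule ℤ (ι → ℤ)) : ℕ :=
  sInf {m | ∃ S : Finset (MvPolynomial ι k), S.card = m ∧
    (∀ f ∈ S, IsLatticeBinomial k L f) ∧
    Ideal.span (S : Set (MvPolynomial ι k)) = latticeIdeal k L}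

/-- A Markov basis of `I_L` : a binomial generating set of least cardinality `μ(I_L)`. -/
def IsMarkovBasis (k : Type*) [Field k] {ι : Type*} (L : Submodule ℤ (ι → ℤ))
    (S : Finset (MvPolynomial ι k)) : Prop :=
  (∀ f ∈ S, IsLatticeBinomial k L f) ∧
  Ideal.span (S : Set (MvPolynomial ι k)) = latticeIdeal k L ∧
  S.card = muIdeal k L

/-- `u` is an `L`-primitive vector : `u ≠ 0`, `u ∈ L`, and whenever `q • u ∈ L` for
a rational `q`, then `q` is an integer. -/
def IsLPrimitive {ι : Type*} (L : Submodule ℤ (ι → ℤ)) (u : ι → ℤ) : Prop :=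
  u ≠ 0 ∧ u ∈ L ∧ ∀ (q : ℚ) (w : ι → ℤ), w ∈ L →
    (∀ i, (w i : ℚ) = q * (u i : ℚ)) → ∃ m : ℤ, q = (m : ℚ)

/-- Projection onto the coordinates in `σ_L`. -/
def projSigma {n : ℕ} (L : Submodule ℤ (Fin n → ℤ)) :
    (Fin n → ℤ) →ₗ[ℤ] ({i : Fin n // i ∈ sigmaL L} → ℤ) :=
  LinearMap.pi fun j => LinearMap.proj j.1

/-- Projection onto the coordinates outside `σ_L` (giving `u ↦ u^σ`). -/
def projCompl {n : ℕ} (L : Submodule ℤ (Fin n → ℤ)) :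
    (Fin n → ℤ) →ₗ[ℤ] ({i : Fin n // i ∉ sigmaL L} → ℤ) :=
  LinearMap.pi fun j => LinearMap.proj j.1

/-- An indispensable binomial: it appears, up to a constant multiple, in every Markov basis. -/
def IsIndispensableBinomial (k : Type*) [Field k] {ι : Type*} (L : Submodule ℤ (ι → ℤ))
    (f : MvPolynomial ι k) : Prop :=
  ∀ S : Finset (MvPolynomial ι k), IsMarkovBasis k L S → ∃ c : k, c ≠ 0 ∧ c • f ∈ S

/-- An indispensable monomial: every Markov basis contains a binomial having it as a term. -/
def IsIndispensableMonomial (k : Type*) [Field k] {ι : Type*} (L : Submodule ℤ (ι → ℤ))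
    (u : ι →₀ ℕ) : Prop :=
  ∀ S : Finset (MvPolynomial ι k), IsMarkovBasis k L S → ∃ f ∈ S, ∃ v : ι →₀ ℕ,
    f = monomial u (1 : k) - monomial v 1 ∨ f = monomial v (1 : k) - monomial u 1

-- helper lemmas
lemma lpure_supp {ι : Type*} (L : Submodule ℤ (ι → ℤ)) :
    ∀ v ∈ Lpure L, ∀ j, j ∉ sigmaL L → v j = 0 := by
  intro v hv
  refine Submodule.span_induction (p := fun v _ => ∀ j, j ∉ sigmaL L → v j = 0)
    ?_ ?_ ?_ ?_ hv
  · intro x hx j hj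
    by_contra h
    exact hj ⟨x, hx, h⟩
  · intro j _; rfl
  · intro x y _ _ hx hy j hj
    simp [Pi.add_apply, hx j hj, hy j hj]
  · intro a x _ hx j hj
    simp [Pi.smul_apply, hx j hj]

lemma lpure_le {ι : Type*} (L : Submodule ℤ (ι → ℤ)) : Lpure L ≤ L :=
  Submodule.span_le.mpr fun _ hw => hw.1

/-- there is a `ℤ`-basis of `L_pure` all of whose elements lie in `L⁺`
and have support equal to `σ_L`. -/
theorem stmt7 {n : ℕ} (L : Submodule ℤ (Fin n → ℤ)) :
    ∃ (ι : Type) (B : Module.Basis ι ℤ (Lpure L)), ∀ i : ι,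
      (B i : Fin n → ℤ) ∈ Lplus L ∧ {j | (B i : Fin n → ℤ) j ≠ 0} = sigmaL L := by
  classical
  rcases Set.eq_empty_or_nonempty (sigmaL L) with hσ | hσ
  · -- σ empty ⇒ Lpure = ⊥
    have hplus : Lplus L = {0} := by
      ext w
      simp only [Set.mem_singleton_iff]
      constructor
      · intro hw; funext j
        by_contra hj
        exact (Set.eq_empty_iff_forall_notMem.mp hσ j) ⟨w, hw, hj⟩
      · rintro rfl; exact ⟨L.zero_mem, fun i => le_rfl⟩
    have hbot : Lpure L = ⊥ := by
      rw [Lpure, hplus, Submodule.span_singleton_eq_bot]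
    haveI : Subsingleton (Lpure L) := by rw [hbot]; infer_instance
    exact ⟨Empty, Module.Basis.empty _, fun i => i.elim⟩
  -- main case
  have hwit : ∀ j ∈ sigmaL L, ∃ w ∈ Lplus L, w j ≠ 0 := fun j hj => hj
  choose wit hwit1 hwit2 using hwit
  set W : Fin n → ℤ := ∑ j : Fin n, if h : j ∈ sigmaL L then wit j h else 0 with hWdef
  have hterm_plus : ∀ j : Fin n, (if h : j ∈ sigmaL L then wit j h else 0) ∈ Lplus L := by
    intro j
    split
    · exact hwit1 _ _
    · exact ⟨L.zero_mem, fun i => le_rfl⟩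
  have hW_L : W ∈ L := Submodule.sum_mem _ fun j _ => (hterm_plus j).1
  have happ : ∀ i, W i = ∑ j : Fin n, (if h : j ∈ sigmaL L then wit j h else 0) i := by
    intro i; rw [hWdef]; simp [Finset.sum_apply]
  have hW_nonneg : ∀ i, 0 ≤ W i := by
    intro i
    rw [happ]
    exact Finset.sum_nonneg fun j _ => (hterm_plus j).2 i
  have hW_pos : ∀ j ∈ sigmaL L, 0 < W j := by
    intro j hj
    rw [happ]
    have h1 : (if h : j ∈ sigmaL L then wit j h else 0) j ≤
        ∑ k : Fin n, (if h : k ∈ sigmaL L then wit k h else 0) j :=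
      Finset.single_le_sum (fun k _ => (hterm_plus k).2 j) (Finset.mem_univ j)
    have h2 : 0 < (if h : j ∈ sigmaL L then wit j h else 0) j := by
      rw [dif_pos hj]
      exact lt_of_le_of_ne ((hwit1 j hj).2 j) (Ne.symm (hwit2 j hj))
    linarith
  have hW_plus : W ∈ Lplus L := ⟨hW_L, hW_nonneg⟩
  have hW_pure : W ∈ Lpure L := Submodule.subset_span hW_plus
  have hW0 : W ≠ 0 := by
    obtain ⟨j, hj⟩ := hσ
    intro h
    have := hW_pos j hj
    rw [h] at this
    simp at this
  obtain ⟨n0, o, hno, bO, bN, a, hsnf⟩ :=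
    Submodule.exists_smith_normal_form_of_le (Pi.basisFun ℤ (Fin n))
      (Submodule.span ℤ {W}) (Lpure L)
      (Submodule.span_le.mpr (by simp [Set.singleton_subset_iff, hW_pure]))
  haveI : Nontrivial (Submodule.span ℤ ({W} : Set (Fin n → ℤ))) :=
    ⟨⟨⟨W, Submodule.mem_span_singleton_self W⟩, 0, by
      simp only [ne_eq, Submodule.mk_eq_zero]; exact hW0⟩⟩
  obtain ⟨i0⟩ : Nonempty (Fin n0) := bN.index_nonempty
  set j0 : Fin o := Fin.castLE hno i0 with hj0def
  set p : Fin n → ℤ := (bO j0 : Fin n → ℤ) with hpdef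
  obtain ⟨c, hc⟩ := Submodule.mem_span_singleton.mp (bN i0).2
  have hkey : c • W = a i0 • p := by rw [hc]; exact hsnf i0
  have hc0 : c ≠ 0 := by
    intro h
    apply bN.ne_zero i0
    have : ((bN i0 : Fin n → ℤ)) = 0 := by rw [← hc, h, zero_smul]
    exact Subtype.ext this
  have ha0 : a i0 ≠ 0 := by
    intro h
    rw [h, zero_smul, smul_eq_zero] at hkey
    rcases hkey with h | h
    exacts [hc0 h, hW0 h]
  set t : ℤ := c * a i0 with htdef
  have ht : t ≠ 0 := mul_ne_zero hc0 ha0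
  have hcoord : ∀ j, c * W j = a i0 * p j := by
    intro j
    have := congr_fun hkey j
    simpa [Pi.smul_apply, smul_eq_mul] using this
  set s : ℤ := if 0 < t then 1 else -1 with hsdef
  have hs2 : s * s = 1 := by rw [hsdef]; split <;> ring
  have hq_pos : ∀ j ∈ sigmaL L, 0 < s * p j := by
    intro j hj
    have h1 : t * p j = c * c * W j := by
      rw [htdef]
      linear_combination (-c) * hcoord j
    have h2 : 0 < c * c * W j := by
      have := hW_pos j hj
      nlinarith [mul_self_pos.mpr hc0]
    rw [hsdef]
    split
    · next h => nlinarith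
    · next h =>
      have hlt : t < 0 := lt_of_le_of_ne (not_lt.mp h) ht
      nlinarith
  have hp_pure : p ∈ Lpure L := (bO j0).2
  have hq0 : ∀ j, j ∉ sigmaL L → p j = 0 := lpure_supp L p hp_pure
  -- shear coefficients
  set N : Fin o → ℤ := fun i => 1 + ∑ j : Fin n, |(bO i : Fin n → ℤ) j| with hNdef
  have hN : ∀ i j, |(bO i : Fin n → ℤ) j| < N i := by
    intro i j
    have h1 : |(bO i : Fin n → ℤ) j| ≤ ∑ k : Fin n, |(bO i : Fin n → ℤ) k| :=
      Finset.single_le_sum (f := fun k => |(bO i : Fin n → ℤ) k|)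
        (fun k _ => abs_nonneg _) (Finset.mem_univ j)
    simp only [hNdef]
    linarith
  have hNpos : ∀ i, 0 < N i := by
    intro i
    have h1 : (0:ℤ) ≤ ∑ k : Fin n, |(bO i : Fin n → ℤ) k| :=
      Finset.sum_nonneg fun k _ => abs_nonneg _
    simp only [hNdef]
    linarith
  -- the new basis vectors
  set v : Fin o → Lpure L := fun i =>
    if i = j0 then s • bO j0 else bO i + (N i * s) • bO j0 with hvdef
  set u : Fin o → Lpure L := fun i =>
    if i = j0 then s • bO j0 else bO i - N i • bO j0 with hudef
  have hvj0 : v j0 = s • bO j0 := by simp only [hvdef, if_pos rfl]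
  have hvne : ∀ i, i ≠ j0 → v i = bO i + (N i * s) • bO j0 := fun i h => by
    simp only [hvdef, if_neg h]
  have huj0 : u j0 = s • bO j0 := by simp only [hudef, if_pos rfl]
  have hune : ∀ i, i ≠ j0 → u i = bO i - N i • bO j0 := fun i h => by
    simp only [hudef, if_neg h]
  set T : Lpure L →ₗ[ℤ] Lpure L := bO.constr ℤ v with hTdef
  set U : Lpure L →ₗ[ℤ] Lpure L := bO.constr ℤ u with hUdef
  have hTb : ∀ i, T (bO i) = v i := fun i => bO.constr_basis ℤ v i
  have hUb : ∀ i, U (bO i) = u i := fun i => bO.constr_basis ℤ u i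
  have hTU : T.comp U = LinearMap.id := by
    refine bO.ext fun i => ?_
    rw [LinearMap.comp_apply, LinearMap.id_apply, hUb]
    by_cases h : i = j0
    · subst h
      rw [huj0, map_smul, hTb, hvj0, smul_smul, hs2, one_smul]
    · rw [hune i h, map_sub, map_smul, hTb, hTb, hvne i h, hvj0, smul_smul]
      abel
  have hUT : U.comp T = LinearMap.id := by
    refine bO.ext fun i => ?_
    rw [LinearMap.comp_apply, LinearMap.id_apply, hTb]
    by_cases h : i = j0
    · subst h
      rw [hvj0, map_smul, hUb, huj0, smul_smul, hs2, one_smul]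
    · rw [hvne i h, map_add, map_smul, hUb, hUb, hune i h, huj0, smul_smul, mul_assoc,
        hs2, mul_one]
      abel
  set e : Lpure L ≃ₗ[ℤ] Lpure L := LinearEquiv.ofLinear T U hTU hUT with hedef
  refine ⟨Fin o, bO.map e, fun i => ?_⟩
  have hBi : ((bO.map e) i : Fin n → ℤ) = (v i : Fin n → ℤ) := by
    rw [Module.Basis.map_apply, hedef, LinearEquiv.ofLinear_apply, hTb]
  rw [hBi]
  by_cases h : i = j0
  · subst h
    rw [hvj0]
    have hcoe : ((s • bO j0 : Lpure L) : Fin n → ℤ) = s • p := rfl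
    rw [hcoe]
    constructor
    · refine ⟨Submodule.smul_mem _ _ (lpure_le L hp_pure), fun j => ?_⟩
      by_cases hjσ : j ∈ sigmaL L
      · exact le_of_lt (by simpa [smul_eq_mul] using hq_pos j hjσ)
      · simp [Pi.smul_apply, smul_eq_mul, hq0 j hjσ]
    · ext j
      simp only [Set.mem_setOf_eq, Pi.smul_apply, smul_eq_mul]
      constructor
      · intro hne
        by_contra hjσ
        exact hne (by rw [hq0 j hjσ, mul_zero])
      · intro hjσ
        exact ne_of_gt (hq_pos j hjσ)
  · rw [hvne i h]
    have hcoe : ((bO i + (N i * s) • bO j0 : Lpure L) : Fin n → ℤ)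
        = (bO i : Fin n → ℤ) + (N i * s) • p := rfl
    rw [hcoe]
    have hb_pure : (bO i : Fin n → ℤ) ∈ Lpure L := (bO i).2
    have hb0 : ∀ j, j ∉ sigmaL L → (bO i : Fin n → ℤ) j = 0 := lpure_supp L _ hb_pure
    have hval : ∀ j, ((bO i : Fin n → ℤ) + (N i * s) • p) j
        = (bO i : Fin n → ℤ) j + N i * (s * p j) := by
      intro j
      simp [Pi.add_apply, Pi.smul_apply, smul_eq_mul]
      ring
    have hpos : ∀ j ∈ sigmaL L, 0 < ((bO i : Fin n → ℤ) + (N i * s) • p) j := by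
      intro j hj
      rw [hval]
      have h1 : 1 ≤ s * p j := hq_pos j hj
      have h2 := hN i j
      have h3 := hNpos i
      have h4 : N i * 1 ≤ N i * (s * p j) := mul_le_mul_of_nonneg_left h1 (le_of_lt h3)
      have h5 : -|(bO i : Fin n → ℤ) j| ≤ (bO i : Fin n → ℤ) j := neg_abs_le _
      linarith
    have hzero : ∀ j, j ∉ sigmaL L → ((bO i : Fin n → ℤ) + (N i * s) • p) j = 0 := by
      intro j hj
      rw [hval, hb0 j hj, hq0 j hj]
      ring
    constructor
    · refine ⟨Submodule.add_mem _ (lpure_le L hb_pure)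
        (Submodule.smul_mem _ _ (lpure_le L hp_pure)), fun j => ?_⟩
      by_cases hjσ : j ∈ sigmaL L
      · exact le_of_lt (hpos j hjσ)
      · rw [hzero j hjσ]
    · ext j
      simp only [Set.mem_setOf_eq]
      constructor
      · intro hne
        by_contra hjσ
        exact hne (hzero j hjσ)
      · intro hjσ
        exact ne_of_gt (hpos j hjσ)
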